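/- Chain rule for top-down differentiation in a DAG circuit: for any non-root node j of a sum-product circuit, D_j := ∂V_root/∂V_j = Σ_{k ∈ parents(j)} [ w_{k,j} D_k if k is a sum node; D_k ∏_{j' ∈ Ch(k), j' ≠ j} V_{j'} if k is a product node ], assuming the circuit is decomposable (so each V_j appears with degree at most 1 in every V_k). -/

import Mathlib

open scoped Classical

/-- The kind of a node in a sum-product network. -/
inductive NodeKind | sum | prod | leaf
deriving DecidableEq

/-- A sum-product network (SPN) over variables `X_1, …, X_n`: a rooted DAG with `N` nodes
(indexed so that edges go from larger to smaller indices), where each node is a sum node,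
a product node, or a leaf labelled with a variable, and sum edges carry weights. -/
structure SPN (N n : ℕ) where
  kind : Fin N → NodeKind
  children : Fin N → Finset (Fin N)
  var : Fin N → Fin n
  root : Fin N
  child_lt : ∀ k, ∀ j ∈ children k, j < k
  leaf_iff : ∀ k, kind k = NodeKind.leaf ↔ children k = ∅

namespace SPN

variable {N n : ℕ}

/-- Recursive evaluation of an SPN: leaves return their given values, product nodes multiply
their children's values, sum nodes take weighted sums of their children's values. -/
noncomputable def value (S : SPN N n) (leaf : Fin N → ℝ) (w : Fin N → Fin N → ℝ) :
    Fin N → ℝ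
  | k =>
    match S.kind k with
    | NodeKind.leaf => leaf k
    | NodeKind.prod => ∏ j ∈ (S.children k).attach, value S leaf w j.1
    | NodeKind.sum => ∑ j ∈ (S.children k).attach, w k j.1 * value S leaf w j.1
  termination_by k => (k : ℕ)
  decreasing_by all_goals exact S.child_lt _ _ j.2

/-- Evaluation where the value of the node `k₀` is overridden by the free value `t`
(used to differentiate the root value with respect to the value of node `k₀`). -/
noncomputable def valueAt (S : SPN N n) (leaf : Fin N → ℝ) (w : Fin N → Fin N → ℝ)
    (k₀ : Fin N) (t : ℝ) : Fin N → ℝ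
  | k =>
    if k = k₀ then t else
      match S.kind k with
      | NodeKind.leaf => leaf k
      | NodeKind.prod => ∏ j ∈ (S.children k).attach, valueAt S leaf w k₀ t j.1
      | NodeKind.sum => ∑ j ∈ (S.children k).attach, w k j.1 * valueAt S leaf w k₀ t j.1
  termination_by k => (k : ℕ)
  decreasing_by all_goals exact S.child_lt _ _ j.2

/-- The scope of a node: the set of variables appearing below it. -/
noncomputable def scope (S : SPN N n) : Fin N → Finset (Fin n)
  | k =>
    match S.kind k with
    | NodeKind.leaf => {S.var k}
    | _ => (S.children k).attach.biUnion (fun j => scope S j.1)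
  termination_by k => (k : ℕ)
  decreasing_by all_goals exact S.child_lt _ _ j.2

/-- An SPN is complete if all children of a sum node have the same scope. -/
def Complete (S : SPN N n) : Prop :=
  ∀ k, S.kind k = NodeKind.sum →
    ∀ j₁ ∈ S.children k, ∀ j₂ ∈ S.children k, S.scope j₁ = S.scope j₂

/-- An SPN is decomposable if distinct children of a product node have disjoint scopes. -/
def Decomposable (S : SPN N n) : Prop :=
  ∀ k, S.kind k = NodeKind.prod →
    ∀ j₁ ∈ S.children k, ∀ j₂ ∈ S.children k, j₁ ≠ j₂ →
      Disjoint (S.scope j₁) (S.scope j₂)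

/-- `(TV, TE)` is an induced tree of the SPN `S`: it contains the root; its edges are edges of
`S` between its nodes; every sum node in it has exactly one outgoing edge in it; every product
node in it keeps all its outgoing edges; and every non-root node in it is the endpoint of one
of its edges. -/
def IsInducedTree (S : SPN N n) (TV : Finset (Fin N)) (TE : Finset (Fin N × Fin N)) : Prop :=
  S.root ∈ TV ∧
  (∀ e ∈ TE, e.1 ∈ TV ∧ e.2 ∈ TV ∧ e.2 ∈ S.children e.1) ∧
  (∀ k ∈ TV, S.kind k = NodeKind.sum → ∃! j, j ∈ S.children k ∧ (k, j) ∈ TE) ∧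
  (∀ k ∈ TV, S.kind k = NodeKind.prod → ∀ j ∈ S.children k, (k, j) ∈ TE) ∧
  (∀ k ∈ TV, k ≠ S.root → ∃ e ∈ TE, e.2 = k)

end SPN

namespace SPN

variable {N n : ℕ}

/-- Downward reachability in the DAG. -/
def Reaches (S : SPN N n) : Fin N → Fin N → Prop :=
  Relation.ReflTransGen (fun a b => b ∈ S.children a)

lemma reaches_refl (S : SPN N n) (k : Fin N) : S.Reaches k k := Relation.ReflTransGen.refl

lemma reaches_of_child {S : SPN N n} {k j : Fin N} (h : j ∈ S.children k) : S.Reaches k j :=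
  Relation.ReflTransGen.single h

lemma reaches_head {S : SPN N n} {k c j : Fin N} (hc : c ∈ S.children k) (h : S.Reaches c j) :
    S.Reaches k j := Relation.ReflTransGen.head hc h

lemma reaches_trans {S : SPN N n} {a b c : Fin N} (h1 : S.Reaches a b) (h2 : S.Reaches b c) :
    S.Reaches a c := Relation.ReflTransGen.trans h1 h2

lemma reaches_le {S : SPN N n} {k j : Fin N} (h : S.Reaches k j) : j ≤ k := by
  induction h with
  | refl => exact le_refl _
  | tail _ hc ih => exact le_of_lt (lt_of_lt_of_le (S.child_lt _ _ hc) ih)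

lemma reaches_cases {S : SPN N n} {m x : Fin N} (h : S.Reaches m x) :
    x = m ∨ ∃ c ∈ S.children m, S.Reaches c x := by
  rcases Relation.ReflTransGen.cases_head h with h | ⟨c, hc, h⟩
  · exact Or.inl h.symm
  · exact Or.inr ⟨c, hc, h⟩

/-- Strong induction on `Fin N`. -/
lemma fin_si {P : Fin N → Prop} (h : ∀ m : Fin N, (∀ c, c < m → P c) → P m) : ∀ m, P m
  | m => wellFounded_lt.induction m h

lemma scope_subset_of_child {S : SPN N n} {k j : Fin N} (h : j ∈ S.children k) :
    S.scope j ⊆ S.scope k := by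
  conv_rhs => rw [scope]
  cases hk : S.kind k with
  | leaf =>
    exfalso
    rw [S.leaf_iff] at hk
    simp [hk] at h
  | sum =>
    show S.scope j ⊆ (S.children k).attach.biUnion (fun c => S.scope c.1)
    exact Finset.subset_biUnion_of_mem (fun (c : {x // x ∈ S.children k}) => S.scope c.1)
      (Finset.mem_attach _ ⟨j, h⟩)
  | prod =>
    show S.scope j ⊆ (S.children k).attach.biUnion (fun c => S.scope c.1)
    exact Finset.subset_biUnion_of_mem (fun (c : {x // x ∈ S.children k}) => S.scope c.1)
      (Finset.mem_attach _ ⟨j, h⟩)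

lemma scope_subset_of_reaches {S : SPN N n} {k j : Fin N} (h : S.Reaches k j) :
    S.scope j ⊆ S.scope k := by
  induction h with
  | refl => exact subset_rfl
  | tail _ hc ih => exact (scope_subset_of_child hc).trans ih

lemma scope_nonempty (S : SPN N n) : ∀ k, (S.scope k).Nonempty := by
  refine fin_si (fun m ih => ?_)
  rw [scope]
  cases hk : S.kind m with
  | leaf => simp
  | sum =>
    have hne : S.children m ≠ ∅ := fun h => by simp [(S.leaf_iff m).mpr h] at hk
    obtain ⟨c, hc⟩ := Finset.nonempty_iff_ne_empty.mpr hne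
    obtain ⟨v, hv⟩ := ih c (S.child_lt _ _ hc)
    exact ⟨v, Finset.mem_biUnion.mpr ⟨⟨c, hc⟩, Finset.mem_attach _ _, hv⟩⟩
  | prod =>
    have hne : S.children m ≠ ∅ := fun h => by simp [(S.leaf_iff m).mpr h] at hk
    obtain ⟨c, hc⟩ := Finset.nonempty_iff_ne_empty.mpr hne
    obtain ⟨v, hv⟩ := ih c (S.child_lt _ _ hc)
    exact ⟨v, Finset.mem_biUnion.mpr ⟨⟨c, hc⟩, Finset.mem_attach _ _, hv⟩⟩

lemma child_unique {S : SPN N n} (hD : S.Decomposable) {m c₁ c₂ x : Fin N}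
    (hm : S.kind m = NodeKind.prod) (h1 : c₁ ∈ S.children m) (h2 : c₂ ∈ S.children m)
    (r1 : S.Reaches c₁ x) (r2 : S.Reaches c₂ x) : c₁ = c₂ := by
  by_contra hne
  obtain ⟨v, hv⟩ := S.scope_nonempty x
  exact Finset.disjoint_left.mp (hD m hm c₁ h1 c₂ h2 hne)
    (scope_subset_of_reaches r1 hv) (scope_subset_of_reaches r2 hv)

section eval

variable {S : SPN N n} {leaf : Fin N → ℝ} {w : Fin N → Fin N → ℝ}

lemma valueAt_self (x : Fin N) (t : ℝ) : S.valueAt leaf w x t x = t := by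
  rw [valueAt, if_pos rfl]

lemma valueAt_leaf {m x : Fin N} (hx : m ≠ x) (hk : S.kind m = NodeKind.leaf) (t : ℝ) :
    S.valueAt leaf w x t m = leaf m := by
  rw [valueAt, if_neg hx, hk]

lemma valueAt_sum' {m x : Fin N} (hx : m ≠ x) (hk : S.kind m = NodeKind.sum) (t : ℝ) :
    S.valueAt leaf w x t m = ∑ c ∈ S.children m, w m c * S.valueAt leaf w x t c := by
  rw [valueAt, if_neg hx, hk]
  show (∑ c ∈ (S.children m).attach, w m c.1 * S.valueAt leaf w x t c.1)
      = ∑ c ∈ S.children m, w m c * S.valueAt leaf w x t c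
  exact Finset.sum_attach (S.children m) (fun c => w m c * S.valueAt leaf w x t c)

lemma valueAt_prod' {m x : Fin N} (hx : m ≠ x) (hk : S.kind m = NodeKind.prod) (t : ℝ) :
    S.valueAt leaf w x t m = ∏ c ∈ S.children m, S.valueAt leaf w x t c := by
  rw [valueAt, if_neg hx, hk]
  show (∏ c ∈ (S.children m).attach, S.valueAt leaf w x t c.1) = _
  exact Finset.prod_attach _ _

lemma value_leaf {m : Fin N} (hk : S.kind m = NodeKind.leaf) :
    S.value leaf w m = leaf m := by rw [value, hk]

lemma value_sum' {m : Fin N} (hk : S.kind m = NodeKind.sum) :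
    S.value leaf w m = ∑ c ∈ S.children m, w m c * S.value leaf w c := by
  rw [value, hk]
  show (∑ c ∈ (S.children m).attach, w m c.1 * S.value leaf w c.1)
      = ∑ c ∈ S.children m, w m c * S.value leaf w c
  exact Finset.sum_attach (S.children m) (fun c => w m c * S.value leaf w c)

lemma value_prod' {m : Fin N} (hk : S.kind m = NodeKind.prod) :
    S.value leaf w m = ∏ c ∈ S.children m, S.value leaf w c := by
  rw [value, hk]
  show (∏ c ∈ (S.children m).attach, S.value leaf w c.1) = _
  exact Finset.prod_attach _ _

lemma valueAt_of_not_reaches {x : Fin N} :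
    ∀ m : Fin N, ¬ S.Reaches m x → ∀ t, S.valueAt leaf w x t m = S.value leaf w m := by
  refine fin_si (fun m ih hr t => ?_)
  have hmx : m ≠ x := fun h => hr (h ▸ S.reaches_refl m)
  have hc : ∀ c ∈ S.children m, S.valueAt leaf w x t c = S.value leaf w c := fun c hc =>
    ih c (S.child_lt _ _ hc) (fun h => hr (reaches_head hc h)) t
  cases hk : S.kind m with
  | leaf => rw [valueAt_leaf hmx hk, value_leaf hk]
  | sum =>
    rw [valueAt_sum' hmx hk, value_sum' hk]
    exact Finset.sum_congr rfl (fun c h => by rw [hc c h])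
  | prod =>
    rw [valueAt_prod' hmx hk, value_prod' hk]
    exact Finset.prod_congr rfl (fun c h => hc c h)

end eval

/-- The slope of the root value (or any node value) as a function of the overridden node. -/
noncomputable def slope (S : SPN N n) (leaf : Fin N → ℝ) (w : Fin N → Fin N → ℝ)
    (x m : Fin N) : ℝ := deriv (fun t => S.valueAt leaf w x t m) 0

/-- Local derivative of node `k` w.r.t. its child `j`. -/
noncomputable def coef (S : SPN N n) (leaf : Fin N → ℝ) (w : Fin N → Fin N → ℝ)
    (k j : Fin N) : ℝ :=
  if S.kind k = NodeKind.sum then w k j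
  else if S.kind k = NodeKind.prod then ∏ c ∈ (S.children k).erase j, S.value leaf w c
  else 0

lemma deriv_affine {f : ℝ → ℝ} {B : ℝ} (h : ∀ t, f t = f 0 + B * t) (x : ℝ) :
    deriv f x = B := by
  obtain ⟨a, ha⟩ : ∃ a, f = fun t => a + B * t := ⟨f 0, funext h⟩
  rw [ha]
  simpa using (((hasDerivAt_id x).const_mul B).const_add a).deriv

section main

variable {S : SPN N n} {leaf : Fin N → ℝ} {w : Fin N → Fin N → ℝ}

lemma slope_of_not_reaches {x m : Fin N} (hr : ¬ S.Reaches m x) :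
    S.slope leaf w x m = 0 := by
  have : (fun t => S.valueAt leaf w x t m) = fun _ => S.value leaf w m :=
    funext (fun t => valueAt_of_not_reaches m hr t)
  rw [slope, this, deriv_const]

lemma slope_self (x : Fin N) : S.slope leaf w x x = 1 := by
  have : (fun t => S.valueAt leaf w x t x) = id := funext (fun t => valueAt_self x t)
  rw [slope, this, deriv_id]

lemma slope_of_lt {x m : Fin N} (h : m < x) : S.slope leaf w x m = 0 :=
  slope_of_not_reaches (fun hr => absurd (reaches_le hr) (not_le.mpr h))

end main

end SPN

namespace SPN

section bigmain

variable {N n : ℕ} {S : SPN N n} {leaf : Fin N → ℝ} {w : Fin N → Fin N → ℝ}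

lemma slope_spec {x m : Fin N} {B : ℝ}
    (h : ∀ t, S.valueAt leaf w x t m = S.valueAt leaf w x 0 m + B * t) :
    S.slope leaf w x m = B := deriv_affine h 0

lemma main_ind (hD : S.Decomposable) : ∀ m : Fin N,
    (∀ x : Fin N, ∀ t : ℝ, S.valueAt leaf w x t m
        = S.valueAt leaf w x 0 m + S.slope leaf w x m * t) ∧
    (∀ x : Fin N, x ≠ m → S.slope leaf w x m
        = ∑ k ∈ Finset.univ.filter (fun k => x ∈ S.children k),
            S.coef leaf w k x * S.slope leaf w k m) := by
  refine fin_si (fun m ih => ?_)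
  -- key computation for sum nodes
  have key_sum : ∀ x : Fin N, m ≠ x → S.kind m = NodeKind.sum → ∀ t,
      S.valueAt leaf w x t m = S.valueAt leaf w x 0 m
        + (∑ c ∈ S.children m, w m c * S.slope leaf w x c) * t := by
    intro x hxm hm t
    rw [valueAt_sum' hxm hm, valueAt_sum' hxm hm,
      Finset.sum_congr rfl (fun c hc => by rw [(ih c (S.child_lt _ _ hc)).1 x t]),
      Finset.sum_mul, ← Finset.sum_add_distrib]
    exact Finset.sum_congr rfl (fun c hc => by ring)
  -- key computation for product nodes
  have key_prod : ∀ x c₀ : Fin N, m ≠ x → S.kind m = NodeKind.prod → c₀ ∈ S.children m →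
      S.Reaches c₀ x → ∀ t,
      S.valueAt leaf w x t m = S.valueAt leaf w x 0 m
        + (S.slope leaf w x c₀ * ∏ c ∈ (S.children m).erase c₀, S.value leaf w c) * t := by
    intro x c₀ hxm hm hc₀ r₀ t
    have huniq : ∀ c ∈ S.children m, S.Reaches c x → c = c₀ :=
      fun c hc rc => child_unique hD hm hc hc₀ rc r₀
    have hsplit : ∀ u : ℝ, S.valueAt leaf w x u m
        = S.valueAt leaf w x u c₀ * ∏ c ∈ (S.children m).erase c₀, S.value leaf w c := by
      intro u
      rw [valueAt_prod' hxm hm, ← Finset.mul_prod_erase _ _ hc₀]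
      congr 1
      refine Finset.prod_congr rfl (fun c hc => ?_)
      have hcc : c ≠ c₀ := (Finset.mem_erase.mp hc).1
      have hcm : c ∈ S.children m := (Finset.mem_erase.mp hc).2
      exact valueAt_of_not_reaches c (fun h => hcc (huniq c hcm h)) u
    rw [hsplit t, hsplit 0, (ih c₀ (S.child_lt _ _ hc₀)).1 x t]
    ring
  constructor
  · -- Part A : affineness with slope
    intro x t
    rcases eq_or_ne m x with rfl | hxm
    · simp [valueAt_self, slope_self]
    by_cases hr : S.Reaches m x
    · rcases reaches_cases hr with h | ⟨c₀, hc₀, r₀⟩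
      · exact absurd h.symm hxm
      cases hm : S.kind m with
      | leaf => exact absurd hc₀ (by simp [(S.leaf_iff m).mp hm])
      | sum =>
        have h := key_sum x hxm hm
        rw [slope_spec h]
        exact h t
      | prod =>
        have h := key_prod x c₀ hxm hm hc₀ r₀
        rw [slope_spec h]
        exact h t
    · rw [valueAt_of_not_reaches m hr t, valueAt_of_not_reaches m hr 0,
        slope_of_not_reaches hr]
      ring
  · -- Part B : chain rule
    intro x hxm
    by_cases hr : S.Reaches m x
    case neg =>
      rw [slope_of_not_reaches hr]
      refine (Finset.sum_eq_zero (fun k hk => ?_)).symm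
      have hxk : x ∈ S.children k := (Finset.mem_filter.mp hk).2
      have hnr : ¬ S.Reaches m k := fun h => hr (reaches_trans h (reaches_of_child hxk))
      rw [slope_of_not_reaches hnr, mul_zero]
    case pos =>
    rcases reaches_cases hr with h | ⟨c₀, hc₀, r₀⟩
    · exact absurd h hxm
    cases hm : S.kind m with
    | leaf => exact absurd hc₀ (by simp [(S.leaf_iff m).mp hm])
    | sum =>
      rw [slope_spec (key_sum x (Ne.symm hxm) hm)]
      have hterm : ∀ k ∈ Finset.univ.filter (fun k => x ∈ S.children k),
          S.coef leaf w k x * S.slope leaf w k m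
            = (if k = m then w m x else 0)
              + S.coef leaf w k x * ∑ c ∈ (S.children m).erase x,
                  w m c * S.slope leaf w k c := by
        intro k hk
        have hxk : x ∈ S.children k := (Finset.mem_filter.mp hk).2
        rcases eq_or_ne k m with rfl | hkm
        · have h1 : S.coef leaf w k x = w k x := by rw [coef, if_pos hm]
          rw [if_pos rfl, h1, slope_self,
            Finset.sum_congr rfl (fun c hc => by
              rw [slope_of_lt (S.child_lt _ _ (Finset.mem_erase.mp hc).2), mul_zero]),
            Finset.sum_const_zero]
          ring
        · have hkm' : S.slope leaf w k m = ∑ c ∈ S.children m, w m c * S.slope leaf w k c :=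
            slope_spec (key_sum k (fun h => hkm h.symm) hm)
          have hx0 : w m x * S.slope leaf w k x = 0 := by
            rw [slope_of_lt (S.child_lt _ _ hxk), mul_zero]
          rw [if_neg hkm, zero_add, hkm',
            Finset.sum_erase (S.children m) hx0]
      rw [Finset.sum_congr rfl hterm, Finset.sum_add_distrib]
      have h1 : (∑ k ∈ Finset.univ.filter (fun k => x ∈ S.children k),
          if k = m then w m x else 0) = if x ∈ S.children m then w m x else 0 := by
        rw [Finset.sum_ite_eq' (Finset.univ.filter (fun k => x ∈ S.children k)) m
          (fun _ => w m x)]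
        simp
      have h2 : (∑ k ∈ Finset.univ.filter (fun k => x ∈ S.children k),
          S.coef leaf w k x * ∑ c ∈ (S.children m).erase x, w m c * S.slope leaf w k c)
          = ∑ c ∈ (S.children m).erase x, w m c * S.slope leaf w x c := by
        rw [Finset.sum_congr rfl (fun k (_ : k ∈ Finset.univ.filter
            (fun k => x ∈ S.children k)) => Finset.mul_sum
            ((S.children m).erase x) (fun c => w m c * S.slope leaf w k c)
            (S.coef leaf w k x)),
          Finset.sum_comm]
        refine Finset.sum_congr rfl (fun c hc => ?_)
        have hcm := Finset.mem_erase.mp hc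
        rw [(ih c (S.child_lt _ _ hcm.2)).2 x (fun h => hcm.1 h.symm), Finset.mul_sum]
        exact Finset.sum_congr rfl (fun k _ => by ring)
      rw [h1, h2]
      by_cases hx : x ∈ S.children m
      · rw [if_pos hx, ← Finset.add_sum_erase _ _ hx, slope_self, mul_one]
      · rw [if_neg hx, zero_add, Finset.erase_eq_of_notMem hx]
    | prod =>
      have huniq : ∀ c ∈ S.children m, S.Reaches c x → c = c₀ :=
        fun c hc rc => child_unique hD hm hc hc₀ rc r₀
      rw [slope_spec (key_prod x c₀ (Ne.symm hxm) hm hc₀ r₀)]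
      rcases eq_or_ne c₀ x with rfl | hcx
      · -- x is itself the child of the product node m
        rw [slope_self, one_mul]
        have hm_mem : m ∈ Finset.univ.filter (fun k => c₀ ∈ S.children k) :=
          Finset.mem_filter.mpr ⟨Finset.mem_univ _, hc₀⟩
        rw [Finset.sum_eq_single_of_mem m hm_mem (fun k hk hkm => ?_)]
        · rw [slope_self, mul_one, coef, if_neg (by simp [hm]), if_pos hm]
        · have hxk : c₀ ∈ S.children k := (Finset.mem_filter.mp hk).2
          have hnr : ¬ S.Reaches m k := by
            intro h
            rcases reaches_cases h with h' | ⟨c, hc, rck⟩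
            · exact hkm h'
            · have rcx : S.Reaches c c₀ := reaches_trans rck (reaches_of_child hxk)
              have hcc : c = c₀ := huniq c hc rcx
              subst hcc
              exact absurd (reaches_le rck) (not_le.mpr (S.child_lt _ _ hxk))
          rw [slope_of_not_reaches hnr, mul_zero]
      · -- the child c₀ of m reaching x is an inner node
        have hne_m : ∀ k, x ∈ S.children k → k ≠ m := by
          intro k hxk hkm
          subst hkm
          exact hcx ((huniq x hxk (S.reaches_refl x))).symm
        rw [(ih c₀ (S.child_lt _ _ hc₀)).2 x (fun h => hcx h.symm), Finset.sum_mul]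
        refine Finset.sum_congr rfl (fun k hk => ?_)
        have hxk : x ∈ S.children k := (Finset.mem_filter.mp hk).2
        have hkm : k ≠ m := hne_m k hxk
        by_cases hrk : S.Reaches c₀ k
        · rw [slope_spec (key_prod k c₀ (fun h => hkm h.symm) hm hc₀ hrk)]
          ring
        · have h1 : S.slope leaf w k c₀ = 0 := slope_of_not_reaches hrk
          have h2 : S.slope leaf w k m = 0 := by
            refine slope_of_not_reaches (fun h => ?_)
            rcases reaches_cases h with h' | ⟨c, hc, rck⟩
            · exact hkm h'
            · exact hrk ((huniq c hc (reaches_trans rck (reaches_of_child hxk))) ▸ rck)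
          rw [h1, h2]
          ring

end bigmain

end SPN

/-- Chain rule for top-down differentiation in a DAG sum-product circuit:
for any non-root node `j` of a decomposable circuit,
`D_j := ∂V_root/∂V_j = Σ_{k ∈ parents(j)} (w_{k,j} D_k` if `k` is a sum node,
`D_k ∏_{j' ∈ Ch(k), j' ≠ j} V_{j'}` if `k` is a product node`)`,
where `D_k = ∂V_root/∂V_k` is formalized by overriding node `k`'s value with a free
variable. -/
theorem SPN.backprop_chain_rule {N n : ℕ} (S : SPN N n)
    (hD : S.Decomposable)
    (leaf : Fin N → ℝ) (w : Fin N → Fin N → ℝ)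
    (j : Fin N) (hj : j ≠ S.root) :
    deriv (fun t : ℝ => S.valueAt leaf w j t S.root) (S.value leaf w j)
      = ∑ k ∈ Finset.univ.filter (fun k => j ∈ S.children k),
          if S.kind k = NodeKind.sum then
            w k j * deriv (fun t : ℝ => S.valueAt leaf w k t S.root) (S.value leaf w k)
          else if S.kind k = NodeKind.prod then
            deriv (fun t : ℝ => S.valueAt leaf w k t S.root) (S.value leaf w k)
              * ∏ j' ∈ (S.children k).erase j, S.value leaf w j'
          else 0 := by
  have main := SPN.main_ind (S := S) (leaf := leaf) (w := w) hD
  have hL : ∀ x : Fin N, deriv (fun t : ℝ => S.valueAt leaf w x t S.root) (S.value leaf w x)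
      = S.slope leaf w x S.root :=
    fun x => SPN.deriv_affine ((main S.root).1 x) (S.value leaf w x)
  rw [hL j, (main S.root).2 j hj]
  refine Finset.sum_congr rfl (fun k _ => ?_)
  rw [hL k]
  cases hkk : S.kind k with
  | sum => simp [SPN.coef, hkk]
  | prod => simp [SPN.coef, hkk, mul_comm]
  | leaf => simp [SPN.coef, hkk]
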